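/- For normal sequences the ψ-Pascal matrices form a group: if Σ_{m=0}^{N} (−1)^m·C_ψ(N,m) = 0 for every integer N ≥ 1, then for every x ∈ K one has P_ψ[x]·P_ψ[−x] = I, the n×n identity matrix. -/

import Mathlib

/-- The ψ-binomial coefficient `C_ψ(n,k) = φ(n)/(φ(k)·φ(n−k))`. -/
noncomputable def psiBinom {K : Type*} [Field K] (φ : ℕ → K) (n k : ℕ) : K :=
  φ n / (φ k * φ (n - k))

/-- The `n×n` ψ-Pascal matrix `P_ψ[x]`. -/
noncomputable def psiPascal {K : Type*} [Field K] (φ : ℕ → K) (n : ℕ) (x : K) :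
    Matrix (Fin n) (Fin n) K :=
  Matrix.of fun i j =>
    if (j : ℕ) ≤ (i : ℕ) then x ^ ((i : ℕ) - (j : ℕ)) * psiBinom φ i j else 0

lemma psi_key {K : Type*} [Field K] (φ : ℕ → K) (h0 : φ 0 = 1) (hφ : ∀ n, φ n ≠ 0)
    (hnormal : ∀ N : ℕ, 1 ≤ N →
      ∑ m ∈ Finset.range (N + 1), (-1 : K) ^ m * psiBinom φ N m = 0)
    (x : K) (i j : ℕ) (hji : j ≤ i) :
    ∑ m ∈ Finset.range (i - j + 1),
      (x ^ (i - (j + m)) * psiBinom φ i (j + m)) *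
        ((-x) ^ ((j + m) - j) * psiBinom φ (j + m) j) = if j = i then 1 else 0 := by
  set N := i - j with hN
  rcases Nat.eq_zero_or_pos N with hN0 | hN1
  · have hij : j = i := by omega
    subst hij
    rw [if_pos rfl, hN0]
    simp [psiBinom, h0]
    rw [div_self (hφ j), one_mul]
  · rw [if_neg (by omega)]
    have key : ∀ m ∈ Finset.range (N + 1),
        (x ^ (i - (j + m)) * psiBinom φ i (j + m)) *
          ((-x) ^ ((j + m) - j) * psiBinom φ (j + m) j)
        = (x ^ N * psiBinom φ i j) * ((-1 : K) ^ m * psiBinom φ N m) := by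
      intro m hm
      have hmN : m ≤ N := by
        simpa [Nat.lt_succ_iff] using Finset.mem_range.mp hm
      have h1 : i - (j + m) = N - m := by omega
      have h2 : (j + m) - j = m := by omega
      have h3 : i - j = N := hN.symm
      have h4 : i - (j + m) + m = N := by omega
      rw [h1, h2]
      have hx : x ^ (N - m) * x ^ m = x ^ N := by
        rw [← pow_add]; congr 1; omega
      simp only [psiBinom]
      rw [h1, h2, h3, neg_pow, ← hx]
      field_simp
      rw [div_eq_div_iff (mul_ne_zero (mul_ne_zero (mul_ne_zero (hφ _) (hφ _)) (hφ _)) (hφ _))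
        (mul_ne_zero (mul_ne_zero (mul_ne_zero (hφ _) (hφ _)) (hφ _)) (hφ _))]
      ring
    rw [Finset.sum_congr rfl key, ← Finset.mul_sum, hnormal N hN1, mul_zero]

/-- For normal sequences the ψ-Pascal matrices form a group: if
`Σ_{m=0}^{N} (−1)^m·C_ψ(N,m) = 0` for every `N ≥ 1`, then
`P_ψ[x]·P_ψ[−x] = I` for every `x ∈ K`. -/
theorem psiPascal_mul_neg_of_normal {K : Type*} [Field K] [CharZero K]
    (φ : ℕ → K) (h0 : φ 0 = 1) (hφ : ∀ n, φ n ≠ 0) (n : ℕ)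
    (hnormal : ∀ N : ℕ, 1 ≤ N →
      ∑ m ∈ Finset.range (N + 1), (-1 : K) ^ m * psiBinom φ N m = 0) :
    ∀ x : K, psiPascal φ n x * psiPascal φ n (-x) = 1 := by
  intro x
  ext i j
  rw [Matrix.mul_apply]
  set F : ℕ → K := fun k =>
    if (j : ℕ) ≤ k ∧ k ≤ (i : ℕ) then
      (x ^ ((i : ℕ) - k) * psiBinom φ i k) * ((-x) ^ (k - (j : ℕ)) * psiBinom φ k j)
    else 0 with hF
  have hterm : ∀ k : Fin n,
      psiPascal φ n x i k * psiPascal φ n (-x) k j = F (k : ℕ) := by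
    intro k
    simp only [psiPascal, Matrix.of_apply, hF]
    by_cases h1 : (k : ℕ) ≤ (i : ℕ) <;> by_cases h2 : (j : ℕ) ≤ (k : ℕ) <;>
      simp [h1, h2]
  rw [Finset.sum_congr rfl fun k _ => hterm k]
  rw [Fin.sum_univ_eq_sum_range F n]
  by_cases hji : (j : ℕ) ≤ (i : ℕ)
  · have hsub : Finset.Icc (j : ℕ) (i : ℕ) ⊆ Finset.range n := by
      intro k hk
      simp only [Finset.mem_Icc] at hk
      exact Finset.mem_range.mpr (lt_of_le_of_lt hk.2 i.isLt)
    rw [← Finset.sum_subset hsub (fun k _ hk => by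
      simp only [Finset.mem_Icc, not_and_or, not_le] at hk
      simp only [hF]
      rw [if_neg]; omega)]
    have : ∑ k ∈ Finset.Icc (j : ℕ) (i : ℕ), F k
        = ∑ m ∈ Finset.range ((i : ℕ) + 1 - (j : ℕ)), F ((j : ℕ) + m) := by
      rw [← Finset.Ico_add_one_right_eq_Icc, Finset.sum_Ico_eq_sum_range]
    rw [this]
    have hr : (i : ℕ) + 1 - (j : ℕ) = (i : ℕ) - (j : ℕ) + 1 := by omega
    rw [hr]
    have hFval : ∀ m ∈ Finset.range ((i : ℕ) - (j : ℕ) + 1), F ((j : ℕ) + m)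
        = (x ^ ((i : ℕ) - ((j : ℕ) + m)) * psiBinom φ i ((j : ℕ) + m)) *
            ((-x) ^ (((j : ℕ) + m) - (j : ℕ)) * psiBinom φ ((j : ℕ) + m) j) := by
      intro m hm
      have hmN : m ≤ (i : ℕ) - (j : ℕ) := by
        simpa [Nat.lt_succ_iff] using Finset.mem_range.mp hm
      simp only [hF]
      rw [if_pos ⟨by omega, by omega⟩]
    rw [Finset.sum_congr rfl hFval, psi_key φ h0 hφ hnormal x i j hji]
    by_cases hij : (j : ℕ) = (i : ℕ)
    · have : i = j := Fin.ext hij.symm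
      simp [this, hij, Matrix.one_apply]
    · have : i ≠ j := fun h => hij (by rw [h])
      simp [hij, Matrix.one_apply_ne this]
  · have hz : ∀ k ∈ Finset.range n, F k = 0 := by
      intro k _
      simp only [hF]
      rw [if_neg]; omega
    rw [Finset.sum_congr rfl hz, Finset.sum_const, smul_zero]
    have : i ≠ j := fun h => hji (by rw [h])
    rw [Matrix.one_apply_ne this]
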